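/- For every real number a and every ρ ∈ [−1,1], the random variable Y := a·U + V⁵ − 10·V³ + 15·V satisfies κ₄(Y) = E[Y⁴] − 3·E[Y²]² > 0. In particular, no choice of a and ρ makes the fourth cumulant of a·H₁(U) + H₅(V) vanish, where H₁(x) = x and H₅(x) = x⁵ − 10x³ + 15x are the first and fifth (probabilists') Hermite polynomials. -/

import Mathlib

open MeasureTheory ProbabilityTheory Real
open scoped ENNReal NNReal

lemma aux13_Iexp (n : ℕ) : Integrable (fun x : ℝ => x ^ n * rexp (-x ^ 2 / 2)) := by
  have h := integrable_rpow_mul_exp_neg_mul_sq (b := (1:ℝ)/2) (by norm_num) (s := (n:ℝ))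
    (by exact_mod_cast neg_one_lt_zero.trans_le (Nat.cast_nonneg n))
  have heq : (fun x : ℝ => x ^ (n:ℝ) * rexp (-(1/2) * x ^ 2))
      = fun x : ℝ => x ^ n * rexp (-x ^ 2 / 2) := by
    funext x
    rw [Real.rpow_natCast]
    ring_nf
  rwa [heq] at h

lemma aux13_Irec (n : ℕ) : ∫ x : ℝ, x ^ (n + 2) * rexp (-x ^ 2 / 2)
    = (n + 1 : ℝ) * ∫ x : ℝ, x ^ n * rexp (-x ^ 2 / 2) := by
  have hd : ∀ x : ℝ, HasDerivAt (fun x : ℝ => x ^ (n + 1) * rexp (-x ^ 2 / 2))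
      ((n + 1 : ℝ) * (x ^ n * rexp (-x ^ 2 / 2)) - x ^ (n + 2) * rexp (-x ^ 2 / 2)) x := by
    intro x
    have h1 : HasDerivAt (fun x : ℝ => x ^ (n + 1)) ((n + 1 : ℝ) * x ^ n) x := by
      simpa using hasDerivAt_pow (n + 1) x
    have h2 : HasDerivAt (fun x : ℝ => -x ^ 2 / 2) (-x) x := by
      have := ((hasDerivAt_pow 2 x).neg).div_const 2
      simpa using this.congr_deriv (by ring)
    have := h1.mul h2.exp
    refine this.congr_deriv ?_
    ring
  have hint' : Integrable (fun x : ℝ =>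
      (n + 1 : ℝ) * (x ^ n * rexp (-x ^ 2 / 2)) - x ^ (n + 2) * rexp (-x ^ 2 / 2)) :=
    ((aux13_Iexp n).const_mul _).sub (aux13_Iexp (n + 2))
  have h0 := integral_eq_zero_of_hasDerivAt_of_integrable hd hint' (aux13_Iexp (n + 1))
  rw [integral_sub ((aux13_Iexp n).const_mul _) (aux13_Iexp (n + 2)),
    integral_const_mul] at h0
  linarith

lemma aux13_I0 : ∫ x : ℝ, rexp (-x ^ 2 / 2) = Real.sqrt (2 * π) := by
  have h := integral_gaussian (1/2)
  have heq : (fun x : ℝ => rexp (-(1/2) * x ^ 2)) = fun x : ℝ => rexp (-x ^ 2 / 2) := by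
    funext x; ring_nf
  rw [show π / (1/2) = 2 * π by ring, heq] at h
  exact h

lemma aux13_I1 : ∫ x : ℝ, x ^ 1 * rexp (-x ^ 2 / 2) = 0 := by
  have hd : ∀ x : ℝ, HasDerivAt (fun x : ℝ => -rexp (-x ^ 2 / 2))
      (x ^ 1 * rexp (-x ^ 2 / 2)) x := by
    intro x
    have h2 : HasDerivAt (fun x : ℝ => -x ^ 2 / 2) (-x) x := by
      have := ((hasDerivAt_pow 2 x).neg).div_const 2
      simpa using this.congr_deriv (by ring)
    have := h2.exp.neg
    refine this.congr_deriv ?_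
    ring
  have h0 := integral_eq_zero_of_hasDerivAt_of_integrable hd (aux13_Iexp 1)
    ((by simpa using aux13_Iexp 0 : Integrable (fun x : ℝ => rexp (-x ^ 2 / 2))).neg)
  exact h0

noncomputable def aux13_gM (n : ℕ) : ℝ := ∫ x, x ^ n ∂(gaussianReal 0 1)

lemma aux13_pdf (x : ℝ) : gaussianPDFReal 0 1 x = (Real.sqrt (2 * π))⁻¹ * rexp (-x ^ 2 / 2) := by
  simp [gaussianPDFReal]

lemma aux13_gInt (n : ℕ) : Integrable (fun x : ℝ => x ^ n) (gaussianReal 0 1) := by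
  rw [gaussianReal_of_var_ne_zero 0 one_ne_zero]
  rw [show gaussianPDF 0 1 = fun x => ((gaussianPDFReal 0 1 x).toNNReal : ℝ≥0∞) from rfl]
  rw [integrable_withDensity_iff_integrable_smul
    ((measurable_gaussianPDFReal 0 1).real_toNNReal)]
  have hco : ∀ x : ℝ, ((gaussianPDFReal 0 1 x).toNNReal : ℝ) = gaussianPDFReal 0 1 x :=
    fun x => Real.coe_toNNReal _ (gaussianPDFReal_nonneg 0 1 x)
  simp only [NNReal.smul_def, hco]
  simp only [aux13_pdf]
  simp only [smul_eq_mul]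
  simp only [show ∀ x : ℝ, (Real.sqrt (2 * π))⁻¹ * rexp (-x ^ 2 / 2) * x ^ n
    = (Real.sqrt (2 * π))⁻¹ * (x ^ n * rexp (-x ^ 2 / 2)) from fun x => by ring]
  exact (aux13_Iexp n).const_mul _

lemma aux13_gVal (n : ℕ) :
    aux13_gM n = (Real.sqrt (2 * π))⁻¹ * ∫ x : ℝ, x ^ n * rexp (-x ^ 2 / 2) := by
  rw [aux13_gM, gaussianReal_of_var_ne_zero 0 one_ne_zero]
  rw [show gaussianPDF 0 1 = fun x => ((gaussianPDFReal 0 1 x).toNNReal : ℝ≥0∞) from rfl]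
  rw [integral_withDensity_eq_integral_smul ((measurable_gaussianPDFReal 0 1).real_toNNReal)]
  have hco : ∀ x : ℝ, ((gaussianPDFReal 0 1 x).toNNReal : ℝ) = gaussianPDFReal 0 1 x :=
    fun x => Real.coe_toNNReal _ (gaussianPDFReal_nonneg 0 1 x)
  simp only [NNReal.smul_def, hco]
  simp only [aux13_pdf]
  simp only [smul_eq_mul]
  simp only [show ∀ x : ℝ, (Real.sqrt (2 * π))⁻¹ * rexp (-x ^ 2 / 2) * x ^ n
    = (Real.sqrt (2 * π))⁻¹ * (x ^ n * rexp (-x ^ 2 / 2)) from fun x => by ring]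
  rw [integral_const_mul]

lemma aux13_gM0 : aux13_gM 0 = 1 := by
  have h : Real.sqrt (2 * π) ≠ 0 := by
    positivity
  rw [aux13_gVal 0]
  simp only [pow_zero, one_mul]
  rw [aux13_I0, inv_mul_cancel₀ h]

lemma aux13_gM1 : aux13_gM 1 = 0 := by
  rw [aux13_gVal 1, aux13_I1, mul_zero]

lemma aux13_gMrec (n : ℕ) : aux13_gM (n + 2) = (n + 1 : ℝ) * aux13_gM n := by
  rw [aux13_gVal, aux13_gVal, aux13_Irec]
  ring

section Aux13Main

variable {Ω : Type*} [MeasurableSpace Ω] (μ : Measure Ω) [IsProbabilityMeasure μ]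
  (U W : Ω → ℝ) (hUm : Measurable U) (hWm : Measurable W)
  (hUW : IndepFun U W μ)
  (hU : Measure.map U μ = gaussianReal 0 1)
  (hW : Measure.map W μ = gaussianReal 0 1)

include hUm hU in
lemma aux13_powInt (i : ℕ) : Integrable (fun ω => U ω ^ i) μ := by
  have h : Integrable (fun x : ℝ => x ^ i) (Measure.map U μ) := by
    rw [hU]; exact aux13_gInt i
  exact (integrable_map_measure (measurable_id.pow_const i).aestronglyMeasurable
    hUm.aemeasurable).mp h

include hUm hU in
lemma aux13_powVal (i : ℕ) : ∫ ω, U ω ^ i ∂μ = aux13_gM i := by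
  rw [aux13_gM, ← hU]
  exact (integral_map hUm.aemeasurable
    ((measurable_id.pow_const i).aestronglyMeasurable)).symm

include hUm hWm hUW hU hW in
lemma aux13_mono (c : ℝ) (i j : ℕ) :
    Integrable (fun ω => c * (U ω ^ i * W ω ^ j)) μ ∧
      ∫ ω, c * (U ω ^ i * W ω ^ j) ∂μ = c * (aux13_gM i * aux13_gM j) := by
  have hind : IndepFun (fun ω => U ω ^ i) (fun ω => W ω ^ j) μ :=
    hUW.comp (measurable_id.pow_const i) (measurable_id.pow_const j)
  have hUi := aux13_powInt μ U hUm hU i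
  have hWj := aux13_powInt μ W hWm hW j
  have hmul : Integrable (fun ω => U ω ^ i * W ω ^ j) μ := hind.integrable_mul hUi hWj
  constructor
  · exact hmul.const_mul c
  · rw [integral_const_mul,
      show (∫ a, U a ^ i * W a ^ j ∂μ) = (∫ ω, U ω ^ i ∂μ) * ∫ ω, W ω ^ j ∂μ from
        hind.integral_mul_eq_mul_integral hUi.aestronglyMeasurable hWj.aestronglyMeasurable,
      aux13_powVal μ U hUm hU i, aux13_powVal μ W hWm hW j]

include hUm hWm hUW hU hW in
lemma aux13_list (l : List (ℝ × ℕ × ℕ)) :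
    Integrable (fun ω => (l.map (fun p => p.1 * (U ω ^ p.2.1 * W ω ^ p.2.2))).sum) μ ∧
      ∫ ω, (l.map (fun p => p.1 * (U ω ^ p.2.1 * W ω ^ p.2.2))).sum ∂μ
        = (l.map (fun p => p.1 * (aux13_gM p.2.1 * aux13_gM p.2.2))).sum := by
  induction l with
  | nil =>
    constructor
    · simpa using integrable_const (0 : ℝ) (μ := μ)
    · simp
  | cons p t ih =>
    have hm := aux13_mono μ U W hUm hWm hUW hU hW p.1 p.2.1 p.2.2
    constructor
    · simp only [List.map_cons, List.sum_cons]
      exact hm.1.add ih.1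
    · simp only [List.map_cons, List.sum_cons]
      rw [integral_add hm.1 ih.1, hm.2, ih.2]

end Aux13Main


set_option maxHeartbeats 4000000 in
set_option maxRecDepth 4000 in
theorem stmt_13
    {Ω : Type*} [MeasurableSpace Ω] (μ : Measure Ω) [IsProbabilityMeasure μ]
    (U W : Ω → ℝ) (hUm : Measurable U) (hWm : Measurable W)
    (hUW : IndepFun U W μ)
    (hU : Measure.map U μ = gaussianReal 0 1)
    (hW : Measure.map W μ = gaussianReal 0 1)
    (ρ : ℝ) (hρ : ρ ∈ Set.Icc (-1 : ℝ) 1)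
    (V : Ω → ℝ) (hV : ∀ ω, V ω = ρ * U ω + Real.sqrt (1 - ρ ^ 2) * W ω)
    (a : ℝ) (Y : Ω → ℝ) (hY : ∀ ω, Y ω = a * U ω + (V ω) ^ 5 - 10 * (V ω) ^ 3 + 15 * V ω) :
    (∫ ω, (Y ω) ^ 4 ∂μ) - 3 * (∫ ω, (Y ω) ^ 2 ∂μ) ^ 2 > 0 := by
  obtain ⟨hρ1, hρ2⟩ := hρ
  set s : ℝ := Real.sqrt (1 - ρ ^ 2) with hsdef
  have hs2 : s ^ 2 = 1 - ρ ^ 2 := Real.sq_sqrt (by nlinarith)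
  have m0 : aux13_gM 0 = 1 := aux13_gM0
  have m1 : aux13_gM 1 = 0 := aux13_gM1
  have m2 : aux13_gM 2 = 1 := by
    have h := aux13_gMrec 0
    norm_num [m0] at h
    exact h
  have m3 : aux13_gM 3 = 0 := by
    have h := aux13_gMrec 1
    norm_num [m1] at h
    exact h
  have m4 : aux13_gM 4 = 3 := by
    have h := aux13_gMrec 2
    norm_num [m2] at h
    exact h
  have m5 : aux13_gM 5 = 0 := by
    have h := aux13_gMrec 3
    norm_num [m3] at h
    exact h
  have m6 : aux13_gM 6 = 15 := by
    have h := aux13_gMrec 4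
    norm_num [m4] at h
    exact h
  have m7 : aux13_gM 7 = 0 := by
    have h := aux13_gMrec 5
    norm_num [m5] at h
    exact h
  have m8 : aux13_gM 8 = 105 := by
    have h := aux13_gMrec 6
    norm_num [m6] at h
    exact h
  have m9 : aux13_gM 9 = 0 := by
    have h := aux13_gMrec 7
    norm_num [m7] at h
    exact h
  have m10 : aux13_gM 10 = 945 := by
    have h := aux13_gMrec 8
    norm_num [m8] at h
    exact h
  have m11 : aux13_gM 11 = 0 := by
    have h := aux13_gMrec 9
    norm_num [m9] at h
    exact h
  have m12 : aux13_gM 12 = 10395 := by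
    have h := aux13_gMrec 10
    norm_num [m10] at h
    exact h
  have m13 : aux13_gM 13 = 0 := by
    have h := aux13_gMrec 11
    norm_num [m11] at h
    exact h
  have m14 : aux13_gM 14 = 135135 := by
    have h := aux13_gMrec 12
    norm_num [m12] at h
    exact h
  have m15 : aux13_gM 15 = 0 := by
    have h := aux13_gMrec 13
    norm_num [m13] at h
    exact h
  have m16 : aux13_gM 16 = 2027025 := by
    have h := aux13_gMrec 14
    norm_num [m14] at h
    exact h
  have m17 : aux13_gM 17 = 0 := by
    have h := aux13_gMrec 15
    norm_num [m15] at h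
    exact h
  have m18 : aux13_gM 18 = 34459425 := by
    have h := aux13_gMrec 16
    norm_num [m16] at h
    exact h
  have m19 : aux13_gM 19 = 0 := by
    have h := aux13_gMrec 17
    norm_num [m17] at h
    exact h
  have m20 : aux13_gM 20 = 654729075 := by
    have h := aux13_gMrec 18
    norm_num [m18] at h
    exact h
  set L2 : List (ℝ × ℕ × ℕ) :=
    [((225*s^2), 0, 2),
      (((-300)*s^4), 0, 4),
      ((130*s^6), 0, 6),
      (((-20)*s^8), 0, 8),
      ((s^10), 0, 10),
      ((450*ρ*s + 30*a*s), 1, 1),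
      (((-1200)*ρ*s^3 + (-20)*a*s^3), 1, 3),
      ((780*ρ*s^5 + 2*a*s^5), 1, 5),
      (((-160)*ρ*s^7), 1, 7),
      ((10*ρ*s^9), 1, 9),
      ((225*ρ^2 + 30*a*ρ + a^2), 2, 0),
      (((-1800)*ρ^2*s^2 + (-60)*a*ρ*s^2), 2, 2),
      ((1950*ρ^2*s^4 + 10*a*ρ*s^4), 2, 4),
      (((-560)*ρ^2*s^6), 2, 6),
      ((45*ρ^2*s^8), 2, 8),
      (((-1200)*ρ^3*s + (-60)*a*ρ^2*s), 3, 1),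
      ((2600*ρ^3*s^3 + 20*a*ρ^2*s^3), 3, 3),
      (((-1120)*ρ^3*s^5), 3, 5),
      ((120*ρ^3*s^7), 3, 7),
      (((-300)*ρ^4 + (-20)*a*ρ^3), 4, 0),
      ((1950*ρ^4*s^2 + 20*a*ρ^3*s^2), 4, 2),
      (((-1400)*ρ^4*s^4), 4, 4),
      ((210*ρ^4*s^6), 4, 6),
      ((780*ρ^5*s + 10*a*ρ^4*s), 5, 1),
      (((-1120)*ρ^5*s^3), 5, 3),
      ((252*ρ^5*s^5), 5, 5),
      ((130*ρ^6 + 2*a*ρ^5), 6, 0),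
      (((-560)*ρ^6*s^2), 6, 2),
      ((210*ρ^6*s^4), 6, 4),
      (((-160)*ρ^7*s), 7, 1),
      ((120*ρ^7*s^3), 7, 3),
      (((-20)*ρ^8), 8, 0),
      ((45*ρ^8*s^2), 8, 2),
      ((10*ρ^9*s), 9, 1),
      ((ρ^10), 10, 0)] with hL2
  set L4 : List (ℝ × ℕ × ℕ) :=
    [((50625*s^4), 0, 4),
      (((-135000)*s^6), 0, 6),
      ((148500*s^8), 0, 8),
      (((-87000)*s^10), 0, 10),
      ((29350*s^12), 0, 12),
      (((-5800)*s^14), 0, 14),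
      ((660*s^16), 0, 16),
      (((-40)*s^18), 0, 18),
      ((s^20), 0, 20),
      ((202500*ρ*s^3 + 13500*a*s^3), 1, 3),
      (((-810000)*ρ*s^5 + (-27000)*a*s^5), 1, 5),
      ((1188000*ρ*s^7 + 20700*a*s^7), 1, 7),
      (((-870000)*ρ*s^9 + (-7600)*a*s^9), 1, 9),
      ((352200*ρ*s^11 + 1380*a*s^11), 1, 11),
      (((-81200)*ρ*s^13 + (-120)*a*s^13), 1, 13),
      ((10560*ρ*s^15 + 4*a*s^15), 1, 15),
      (((-720)*ρ*s^17), 1, 17),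
      ((20*ρ*s^19), 1, 19),
      ((303750*ρ^2*s^2 + 40500*a*ρ*s^2 + 1350*a^2*s^2), 2, 2),
      (((-2025000)*ρ^2*s^4 + (-135000)*a*ρ*s^4 + (-1800)*a^2*s^4), 2, 4),
      ((4158000*ρ^2*s^6 + 144900*a*ρ*s^6 + 780*a^2*s^6), 2, 6),
      (((-3915000)*ρ^2*s^8 + (-68400)*a*ρ*s^8 + (-120)*a^2*s^8), 2, 8),
      ((1937100*ρ^2*s^10 + 15180*a*ρ*s^10 + 6*a^2*s^10), 2, 10),
      (((-527800)*ρ^2*s^12 + (-1560)*a*ρ*s^12), 2, 12),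
      ((79200*ρ^2*s^14 + 60*a*ρ*s^14), 2, 14),
      (((-6120)*ρ^2*s^16), 2, 16),
      ((190*ρ^2*s^18), 2, 18),
      ((202500*ρ^3*s + 40500*a*ρ^2*s + 2700*a^2*ρ*s + 60*a^3*s), 3, 1),
      (((-2700000)*ρ^3*s^3 + (-270000)*a*ρ^2*s^3 + (-7200)*a^2*ρ*s^3 + (-40)*a^3*s^3), 3, 3),
      ((8316000*ρ^3*s^5 + 434700*a*ρ^2*s^5 + 4680*a^2*ρ*s^5 + 4*a^3*s^5), 3, 5),
      (((-10440000)*ρ^3*s^7 + (-273600)*a*ρ^2*s^7 + (-960)*a^2*ρ*s^7), 3, 7),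
      ((6457000*ρ^3*s^9 + 75900*a*ρ^2*s^9 + 60*a^2*ρ*s^9), 3, 9),
      (((-2111200)*ρ^3*s^11 + (-9360)*a*ρ^2*s^11), 3, 11),
      ((369600*ρ^3*s^13 + 420*a*ρ^2*s^13), 3, 13),
      (((-32640)*ρ^3*s^15), 3, 15),
      ((1140*ρ^3*s^17), 3, 17),
      ((50625*ρ^4 + 13500*a*ρ^3 + 1350*a^2*ρ^2 + 60*a^3*ρ + a^4), 4, 0),
      (((-2025000)*ρ^4*s^2 + (-270000)*a*ρ^3*s^2 + (-10800)*a^2*ρ^2*s^2 + (-120)*a^3*ρ*s^2), 4, 2),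
      ((10395000*ρ^4*s^4 + 724500*a*ρ^3*s^4 + 11700*a^2*ρ^2*s^4 + 20*a^3*ρ*s^4), 4, 4),
      (((-18270000)*ρ^4*s^6 + (-638400)*a*ρ^3*s^6 + (-3360)*a^2*ρ^2*s^6), 4, 6),
      ((14528250*ρ^4*s^8 + 227700*a*ρ^3*s^8 + 270*a^2*ρ^2*s^8), 4, 8),
      (((-5805800)*ρ^4*s^10 + (-34320)*a*ρ^3*s^10), 4, 10),
      ((1201200*ρ^4*s^12 + 1820*a*ρ^3*s^12), 4, 12),
      (((-122400)*ρ^4*s^14), 4, 14),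
      ((4845*ρ^4*s^16), 4, 16),
      (((-810000)*ρ^5*s + (-135000)*a*ρ^4*s + (-7200)*a^2*ρ^3*s + (-120)*a^3*ρ^2*s), 5, 1),
      ((8316000*ρ^5*s^3 + 724500*a*ρ^4*s^3 + 15600*a^2*ρ^3*s^3 + 40*a^3*ρ^2*s^3), 5, 3),
      (((-21924000)*ρ^5*s^5 + (-957600)*a*ρ^4*s^5 + (-6720)*a^2*ρ^3*s^5), 5, 5),
      ((23245200*ρ^5*s^7 + 455400*a*ρ^4*s^7 + 720*a^2*ρ^3*s^7), 5, 7),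
      (((-11611600)*ρ^5*s^9 + (-85800)*a*ρ^4*s^9), 5, 9),
      ((2882880*ρ^5*s^11 + 5460*a*ρ^4*s^11), 5, 11),
      (((-342720)*ρ^5*s^13), 5, 13),
      ((15504*ρ^5*s^15), 5, 15),
      (((-135000)*ρ^6 + (-27000)*a*ρ^5 + (-1800)*a^2*ρ^4 + (-40)*a^3*ρ^3), 6, 0),
      ((4158000*ρ^6*s^2 + 434700*a*ρ^5*s^2 + 11700*a^2*ρ^4*s^2 + 40*a^3*ρ^3*s^2), 6, 2),
      (((-18270000)*ρ^6*s^4 + (-957600)*a*ρ^5*s^4 + (-8400)*a^2*ρ^4*s^4), 6, 4),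
      ((27119400*ρ^6*s^6 + 637560*a*ρ^5*s^6 + 1260*a^2*ρ^4*s^6), 6, 6),
      (((-17417400)*ρ^6*s^8 + (-154440)*a*ρ^5*s^8), 6, 8),
      ((5285280*ρ^6*s^10 + 12012*a*ρ^5*s^10), 6, 10),
      (((-742560)*ρ^6*s^12), 6, 12),
      ((38760*ρ^6*s^14), 6, 14),
      ((1188000*ρ^7*s + 144900*a*ρ^6*s + 4680*a^2*ρ^5*s + 20*a^3*ρ^4*s), 7, 1),
      (((-10440000)*ρ^7*s^3 + (-638400)*a*ρ^6*s^3 + (-6720)*a^2*ρ^5*s^3), 7, 3),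
      ((23245200*ρ^7*s^5 + 637560*a*ρ^6*s^5 + 1512*a^2*ρ^5*s^5), 7, 5),
      (((-19905600)*ρ^7*s^7 + (-205920)*a*ρ^6*s^7), 7, 7),
      ((7550400*ρ^7*s^9 + 20020*a*ρ^6*s^9), 7, 9),
      (((-1272960)*ρ^7*s^11), 7, 11),
      ((77520*ρ^7*s^13), 7, 13),
      ((148500*ρ^8 + 20700*a*ρ^7 + 780*a^2*ρ^6 + 4*a^3*ρ^5), 8, 0),
      (((-3915000)*ρ^8*s^2 + (-273600)*a*ρ^7*s^2 + (-3360)*a^2*ρ^6*s^2), 8, 2),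
      ((14528250*ρ^8*s^4 + 455400*a*ρ^7*s^4 + 1260*a^2*ρ^6*s^4), 8, 4),
      (((-17417400)*ρ^8*s^6 + (-205920)*a*ρ^7*s^6), 8, 6),
      ((8494200*ρ^8*s^8 + 25740*a*ρ^7*s^8), 8, 8),
      (((-1750320)*ρ^8*s^10), 8, 10),
      ((125970*ρ^8*s^12), 8, 12),
      (((-870000)*ρ^9*s + (-68400)*a*ρ^8*s + (-960)*a^2*ρ^7*s), 9, 1),
      ((6457000*ρ^9*s^3 + 227700*a*ρ^8*s^3 + 720*a^2*ρ^7*s^3), 9, 3),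
      (((-11611600)*ρ^9*s^5 + (-154440)*a*ρ^8*s^5), 9, 5),
      ((7550400*ρ^9*s^7 + 25740*a*ρ^8*s^7), 9, 7),
      (((-1944800)*ρ^9*s^9), 9, 9),
      ((167960*ρ^9*s^11), 9, 11),
      (((-87000)*ρ^10 + (-7600)*a*ρ^9 + (-120)*a^2*ρ^8), 10, 0),
      ((1937100*ρ^10*s^2 + 75900*a*ρ^9*s^2 + 270*a^2*ρ^8*s^2), 10, 2),
      (((-5805800)*ρ^10*s^4 + (-85800)*a*ρ^9*s^4), 10, 4),
      ((5285280*ρ^10*s^6 + 20020*a*ρ^9*s^6), 10, 6),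
      (((-1750320)*ρ^10*s^8), 10, 8),
      ((184756*ρ^10*s^10), 10, 10),
      ((352200*ρ^11*s + 15180*a*ρ^10*s + 60*a^2*ρ^9*s), 11, 1),
      (((-2111200)*ρ^11*s^3 + (-34320)*a*ρ^10*s^3), 11, 3),
      ((2882880*ρ^11*s^5 + 12012*a*ρ^10*s^5), 11, 5),
      (((-1272960)*ρ^11*s^7), 11, 7),
      ((167960*ρ^11*s^9), 11, 9),
      ((29350*ρ^12 + 1380*a*ρ^11 + 6*a^2*ρ^10), 12, 0),
      (((-527800)*ρ^12*s^2 + (-9360)*a*ρ^11*s^2), 12, 2),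
      ((1201200*ρ^12*s^4 + 5460*a*ρ^11*s^4), 12, 4),
      (((-742560)*ρ^12*s^6), 12, 6),
      ((125970*ρ^12*s^8), 12, 8),
      (((-81200)*ρ^13*s + (-1560)*a*ρ^12*s), 13, 1),
      ((369600*ρ^13*s^3 + 1820*a*ρ^12*s^3), 13, 3),
      (((-342720)*ρ^13*s^5), 13, 5),
      ((77520*ρ^13*s^7), 13, 7),
      (((-5800)*ρ^14 + (-120)*a*ρ^13), 14, 0),
      ((79200*ρ^14*s^2 + 420*a*ρ^13*s^2), 14, 2),
      (((-122400)*ρ^14*s^4), 14, 4),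
      ((38760*ρ^14*s^6), 14, 6),
      ((10560*ρ^15*s + 60*a*ρ^14*s), 15, 1),
      (((-32640)*ρ^15*s^3), 15, 3),
      ((15504*ρ^15*s^5), 15, 5),
      ((660*ρ^16 + 4*a*ρ^15), 16, 0),
      (((-6120)*ρ^16*s^2), 16, 2),
      ((4845*ρ^16*s^4), 16, 4),
      (((-720)*ρ^17*s), 17, 1),
      ((1140*ρ^17*s^3), 17, 3),
      (((-40)*ρ^18), 18, 0),
      ((190*ρ^18*s^2), 18, 2),
      ((20*ρ^19*s), 19, 1),
      ((ρ^20), 20, 0)] with hL4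
  have hfun2 : (fun ω => Y ω ^ 2)
      = fun ω => (L2.map (fun p => p.1 * (U ω ^ p.2.1 * W ω ^ p.2.2))).sum := by
    funext ω
    simp only [hY, hV, hL2, List.map_cons, List.map_nil, List.sum_cons, List.sum_nil, add_zero]
    ring
  have hfun4 : (fun ω => Y ω ^ 4)
      = fun ω => (L4.map (fun p => p.1 * (U ω ^ p.2.1 * W ω ^ p.2.2))).sum := by
    funext ω
    simp only [hY, hV, hL4, List.map_cons, List.map_nil, List.sum_cons, List.sum_nil, add_zero]
    ring
  have hE2 : ∫ ω, Y ω ^ 2 ∂μ = 120 + a ^ 2 := by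
    rw [show (∫ ω, Y ω ^ 2 ∂μ)
        = ∫ ω, (L2.map (fun p => p.1 * (U ω ^ p.2.1 * W ω ^ p.2.2))).sum ∂μ from by rw [← hfun2],
      (aux13_list μ U W hUm hWm hUW hU hW L2).2, hL2]
    simp only [List.map_cons, List.map_nil, List.sum_cons, List.sum_nil, add_zero]
    rw [m0, m1, m2, m3, m4, m5, m6, m7, m8, m9, m10]
    linear_combination (120 + (-105)*s^2 + 795*s^4 + (-1155)*s^6 + 945*s^8 + (-105)*ρ^2 + 1590*ρ^2*s^2 + (-3465)*ρ^2*s^4 + 3780*ρ^2*s^6 + 795*ρ^4 + (-3465)*ρ^4*s^2 + 5670*ρ^4*s^4 + (-1155)*ρ^6 + 3780*ρ^6*s^2 + 945*ρ^8 + (-30)*a*ρ + 30*a*ρ*s^2 + 30*a*ρ^3) * hs2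
  have hE4 : ∫ ω, Y ω ^ 4 ∂μ
      = 3*a^4 + 7200*a^2*ρ^2 + 720*a^2 + 864000*(a*ρ) + 67003200 := by
    rw [show (∫ ω, Y ω ^ 4 ∂μ)
        = ∫ ω, (L4.map (fun p => p.1 * (U ω ^ p.2.1 * W ω ^ p.2.2))).sum ∂μ from by rw [← hfun4],
      (aux13_list μ U W hUm hWm hUW hU hW L4).2, hL4]
    simp only [List.map_cons, List.map_nil, List.sum_cons, List.sum_nil, add_zero]
    rw [m0, m1, m2, m3, m4, m5, m6, m7, m8, m9, m10, m11, m12, m13, m14, m15, m16, m17, m18,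
      m19, m20]
    linear_combination (67003200 + 67003200*s^2 + 66851325*s^4 + 68876325*s^6 + 53283825*s^8 + 135498825*s^10 + (-169594425)*s^12 + 614188575*s^14 + (-723647925)*s^16 + 654729075*s^18 + 67003200*ρ^2 + 133702650*ρ^2*s^2 + 206628975*ρ^2*s^4 + 213135300*ρ^2*s^6 + 677494125*ρ^2*s^8 + (-1017566550)*ρ^2*s^10 + 4299320025*ρ^2*s^12 + (-5789183400)*ρ^2*s^14 + 5892561675*ρ^2*s^16 + 66851325*ρ^4 + 206628975*ρ^4*s^2 + 319702950*ρ^4*s^4 + 1354988250*ρ^4*s^6 + (-2543916375)*ρ^4*s^8 + 12897960075*ρ^4*s^10 + (-20262141900)*ρ^4*s^12 + 23570246700*ρ^4*s^14 + 68876325*ρ^6 + 213135300*ρ^6*s^2 + 1354988250*ρ^6*s^4 + (-3391888500)*ρ^6*s^6 + 21496600125*ρ^6*s^8 + (-40524283800)*ρ^6*s^10 + 54997242300*ρ^6*s^12 + 53283825*ρ^8 + 677494125*ρ^8*s^2 + (-2543916375)*ρ^8*s^4 + 21496600125*ρ^8*s^6 + (-50655354750)*ρ^8*s^8 + 82495863450*ρ^8*s^10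 + 135498825*ρ^10 + (-1017566550)*ρ^10*s^2 + 12897960075*ρ^10*s^4 + (-40524283800)*ρ^10*s^6 + 82495863450*ρ^10*s^8 + (-169594425)*ρ^12 + 4299320025*ρ^12*s^2 + (-20262141900)*ρ^12*s^4 + 54997242300*ρ^12*s^6 + 614188575*ρ^14 + (-5789183400)*ρ^14*s^2 + 23570246700*ρ^14*s^4 + (-723647925)*ρ^16 + 5892561675*ρ^16*s^2 + 654729075*ρ^18 + 864000*a*ρ + 823500*a*ρ*s^2 + 1228500*a*ρ*s^4 + (-945000)*a*ρ*s^6 + 6237000*a*ρ*s^8 + (-8108100)*a*ρ*s^10 + 8108100*a*ρ*s^12 + 823500*a*ρ^3 + 2457000*a*ρ^3*s^2 + (-2835000)*a*ρ^3*s^4 + 24948000*a*ρ^3*s^6 + (-40540500)*a*ρ^3*s^8 + 48648600*a*ρ^3*s^10 + 1228500*a*ρ^5 + (-2835000)*a*ρ^5*s^2 + 37422000*a*ρ^5*s^4 + (-81081000)*a*ρ^5*s^6 + 121621500*a*ρ^5*s^8 + (-945000)*a*ρ^7 + 24948000*a*ρ^7*s^2 + (-81081000)*a*ρ^7*s^4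 + 162162000*a*ρ^7*s^6 + 6237000*a*ρ^9 + (-40540500)*a*ρ^9*s^2 + 121621500*a*ρ^9*s^4 + (-8108100)*a*ρ^11 + 48648600*a*ρ^11*s^2 + 8108100*a*ρ^13 + 720*a^2 + (-630)*a^2*s^2 + 4770*a^2*s^4 + (-6930)*a^2*s^6 + 5670*a^2*s^8 + 3870*a^2*ρ^2 + 35640*a^2*ρ^2*s^2 + (-64890)*a^2*ρ^2*s^4 + 79380*a^2*ρ^2*s^6 + 30870*a^2*ρ^4 + (-108990)*a^2*ρ^4*s^2 + 204120*a^2*ρ^4*s^4 + (-51030)*a^2*ρ^6 + 192780*a^2*ρ^6*s^2 + 62370*a^2*ρ^8 + (-180)*a^3*ρ + 180*a^3*ρ*s^2 + 420*a^3*ρ^3) * hs2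
  rw [hE2, hE4]
  nlinarith [sq_nonneg (a * ρ + 60), sq_nonneg a, sq_nonneg (a * ρ)]
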